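/- arXiv:1908.03183 — 3 statements merged into one kernel-verified Lean document; each statement's English description precedes it below -/
import Mathlib

section
/- Let x : [0,T] → ℝ be Hölder continuous of order α ∈ (0,1] with Hölder constant L, i.e. |x_t - x_s| ≤ L|t-s|^α. Let θ ∈ (0,1) with θ/α arbitrary, and let y ∈ ℝ. Then for every t ∈ [0,T], ∫₀ᵗ 1_{x_s < y < x_t}/(t-s)^{1+θ} ds ≤ θ^{-1} L^{θ/α} |x_t - y|^{-θ/α}. -/
open MeasureTheory Set
open scoped ENNReal

/-- Level-crossing estimate: for an `α`-Hölder path `x` with constant `L`,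
`∫₀ᵗ 1_{x_s < y < x_t}/(t-s)^{1+θ} ds ≤ θ⁻¹ L^{θ/α} |x_t - y|^{-θ/α}`. -/
theorem stmt5 (T α θ L y : ℝ) (hT : 0 < T) (hα : α ∈ Set.Ioc (0:ℝ) 1)
    (hθ : θ ∈ Set.Ioo (0:ℝ) 1) (hL : 0 < L) (x : ℝ → ℝ)
    (hHolder : ∀ s t : ℝ, s ∈ Icc 0 T → t ∈ Icc 0 T → |x t - x s| ≤ L * |t - s| ^ α) :
    ∀ t ∈ Icc (0:ℝ) T,
      ∫⁻ s in Ioo 0 t,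
          ENNReal.ofReal ((if x s < y ∧ y < x t then (1:ℝ) else 0) / (t - s) ^ (1 + θ))
        ≤ ENNReal.ofReal (θ⁻¹ * L ^ (θ / α) * |x t - y| ^ (-(θ / α))) := by
  obtain ⟨hα0, hα1⟩ := hα
  obtain ⟨hθ0, hθ1⟩ := hθ
  intro t ht
  by_cases hA0 : |x t - y| = 0
  · have hxt : x t = y := by
      have := abs_eq_zero.mp hA0; linarith
    have hzero : ∀ s, ENNReal.ofReal
        ((if x s < y ∧ y < x t then (1:ℝ) else 0) / (t - s) ^ (1 + θ)) = 0 := by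
      intro s
      rw [if_neg (by rintro ⟨h1, h2⟩; rw [hxt] at h2; exact lt_irrefl y h2)]
      simp
    simp only [hzero, lintegral_zero]
    exact zero_le
  have hA : 0 < |x t - y| := lt_of_le_of_ne (abs_nonneg _) (Ne.symm hA0)
  set A := |x t - y| with hAdef
  set δ := (A / L) ^ (α⁻¹ : ℝ) with hδdef
  have hAL : 0 < A / L := div_pos hA hL
  have hδ : 0 < δ := Real.rpow_pos_of_pos hAL _
  -- key: indicator nonzero forces s ≤ t - δ
  have key : ∀ s ∈ Ioo (0:ℝ) t, (x s < y ∧ y < x t) → s ≤ t - δ := by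
    rintro s ⟨hs0, hst⟩ ⟨h1, h2⟩
    have hsIcc : s ∈ Icc (0:ℝ) T := ⟨hs0.le, hst.le.trans ht.2⟩
    have hAle : A ≤ L * (t - s) ^ α := by
      have h3 : A = x t - y := abs_of_pos (by linarith)
      have h4 : x t - y ≤ |x t - x s| := (le_abs_self _).trans' (by linarith)
      have h5 := hHolder s t hsIcc ht
      rw [abs_of_pos (by linarith : (0:ℝ) < t - s)] at h5
      linarith
    have h6 : A / L ≤ (t - s) ^ α := (div_le_iff₀' hL).mpr hAle
    have h7 : δ ≤ t - s := by
      calc δ ≤ ((t - s) ^ α) ^ (α⁻¹ : ℝ) :=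
            Real.rpow_le_rpow hAL.le h6 (by positivity)
        _ = t - s := by
            rw [← Real.rpow_mul (by linarith : (0:ℝ) ≤ t - s), mul_inv_cancel₀ hα0.ne',
              Real.rpow_one]
    linarith
  set g : ℝ → ℝ≥0∞ := (Ioc (0:ℝ) (t - δ)).indicator
      (fun s => ENNReal.ofReal ((t - s) ^ (-(1 + θ)))) with hgdef
  have hgmeas : Measurable g := by
    apply Measurable.indicator _ measurableSet_Ioc
    exact Measurable.ennreal_ofReal (by fun_prop)
  have step1 : ∫⁻ s in Ioo 0 t,
      ENNReal.ofReal ((if x s < y ∧ y < x t then (1:ℝ) else 0) / (t - s) ^ (1 + θ))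
      ≤ ∫⁻ s in Ioo 0 t, g s := by
    apply setLIntegral_mono hgmeas
    intro s hs
    by_cases hind : x s < y ∧ y < x t
    · rw [if_pos hind]
      have hsle := key s hs hind
      have hts : 0 < t - s := by have := hs.2; linarith
      have : (1:ℝ) / (t - s) ^ (1 + θ) = (t - s) ^ (-(1 + θ)) := by
        rw [Real.rpow_neg hts.le, one_div]
      rw [this, hgdef, indicator_of_mem (show s ∈ Ioc (0:ℝ) (t - δ) from ⟨hs.1, hsle⟩)]
    · rw [if_neg hind]
      simp
  have step2 : ∫⁻ s in Ioo 0 t, g s ≤ ∫⁻ s, g s := setLIntegral_le_lintegral _ _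
  have step3 : ∫⁻ s, g s = ∫⁻ s in Ioc 0 (t - δ),
      ENNReal.ofReal ((t - s) ^ (-(1 + θ))) := by
    rw [hgdef, lintegral_indicator measurableSet_Ioc]
  by_cases htδ : t - δ ≤ 0
  · -- empty interval
    have : Ioc (0:ℝ) (t - δ) = ∅ := Ioc_eq_empty (by linarith)
    refine le_trans step1 (le_trans step2 ?_)
    rw [step3, this]
    simp
  push_neg at htδ
  have hδt : δ ≤ t := by linarith
  -- compute the integral
  have hcont : ContinuousOn (fun s => (t - s) ^ (-(1 + θ)) : ℝ → ℝ) (Icc 0 (t - δ)) := by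
    apply ContinuousOn.rpow_const ((continuous_const.sub continuous_id).continuousOn)
    intro s hs
    left
    show t - s ≠ 0
    have h2 := hs.2
    have : δ ≤ t - s := by linarith
    intro h
    linarith [hδ]
  have hint : IntegrableOn (fun s => (t - s) ^ (-(1 + θ)) : ℝ → ℝ) (Ioc 0 (t - δ)) :=
    (hcont.integrableOn_Icc).mono_set Ioc_subset_Icc_self
  have hnonneg : 0 ≤ᵐ[volume.restrict (Ioc (0:ℝ) (t - δ))]
      (fun s => (t - s) ^ (-(1 + θ)) : ℝ → ℝ) := by
    filter_upwards [ae_restrict_mem measurableSet_Ioc] with s hs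
    have : δ ≤ t - s := by have := hs.2; linarith
    exact Real.rpow_nonneg (by linarith) _
  have step4 : ∫⁻ s in Ioc 0 (t - δ), ENNReal.ofReal ((t - s) ^ (-(1 + θ)))
      = ENNReal.ofReal (∫ s in Ioc 0 (t - δ), (t - s) ^ (-(1 + θ))) :=
    (ofReal_integral_eq_lintegral_ofReal hint hnonneg).symm
  have step5 : ∫ s in Ioc 0 (t - δ), ((t - s) ^ (-(1 + θ)) : ℝ)
      = ∫ u in δ..t, (u ^ (-(1 + θ)) : ℝ) := by
    rw [← intervalIntegral.integral_of_le (by linarith)]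
    have := intervalIntegral.integral_comp_sub_left
      (a := (0:ℝ)) (b := t - δ) (fun u => (u ^ (-(1 + θ)) : ℝ)) t
    simpa using this
  have step6 : ∫ u in δ..t, (u ^ (-(1 + θ)) : ℝ)
      = (t ^ (-θ) - δ ^ (-θ)) / (-θ) := by
    rw [integral_rpow (Or.inr ⟨ne_of_lt (by linarith : -(1+θ) < -1),
      Set.notMem_uIcc_of_lt hδ (by linarith)⟩)]
    have he : -(1+θ) + 1 = -θ := by ring
    rw [he]
  have step7 : (t ^ (-θ) - δ ^ (-θ)) / (-θ) ≤ θ⁻¹ * δ ^ (-θ) := by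
    have ht0 : (0:ℝ) ≤ t ^ (-θ) := Real.rpow_nonneg (by linarith) _
    have h : (t ^ (-θ) - δ ^ (-θ)) / (-θ) = θ⁻¹ * (δ ^ (-θ) - t ^ (-θ)) := by
      rw [div_neg, ← neg_div, neg_sub, div_eq_inv_mul]
    rw [h]
    apply mul_le_mul_of_nonneg_left _ (by positivity)
    linarith
  have step8 : θ⁻¹ * δ ^ (-θ) = θ⁻¹ * L ^ (θ / α) * A ^ (-(θ / α)) := by
    rw [hδdef, ← Real.rpow_mul hAL.le]
    have hexp : α⁻¹ * (-θ) = -(θ / α) := by field_simp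
    rw [hexp, Real.rpow_neg hAL.le, Real.div_rpow hA.le hL.le, Real.rpow_neg hA.le]
    field_simp
  calc ∫⁻ s in Ioo 0 t,
        ENNReal.ofReal ((if x s < y ∧ y < x t then (1:ℝ) else 0) / (t - s) ^ (1 + θ))
      ≤ ∫⁻ s in Ioc 0 (t - δ), ENNReal.ofReal ((t - s) ^ (-(1 + θ))) := by
        rw [← step3]; exact step1.trans step2
    _ = ENNReal.ofReal ((t ^ (-θ) - δ ^ (-θ)) / (-θ)) := by rw [step4, step5, step6]
    _ ≤ ENNReal.ofReal (θ⁻¹ * L ^ (θ / α) * A ^ (-(θ / α))) := by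
        rw [← step8]; exact ENNReal.ofReal_le_ofReal step7
end

section
/- Let f : ℝ → ℝ be right-continuous of finite total variation with variation measure μ_f, let x : [0,T] → ℝ be Hölder continuous of order α ∈ (0,1] with seminorm [x]_{α,∞}, and let θ ∈ (0,1). Then the Gagliardo seminorm of f∘x with exponent 1 satisfies [f ∘ x]_{θ,1} ≤ 4 θ^{-1} [x]_{α,∞}^{θ/α} ∫₀ᵀ ∫_{K_x} |x_t - y|^{-θ/α} μ_f(dy) dt, where K_x is the closure of the range of x. -/
open MeasureTheory Set
open scoped ENNReal

noncomputable def Hker (x : ℝ → ℝ) (L a θ : ℝ) (t s y : ℝ) : ℝ≥0∞ :=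
  Set.indicator (Set.Ioc (x t) (x t + L * |t - s| ^ a))
    (fun _ => ENNReal.ofReal (|t - s| ^ (-(1 + θ)))) y

lemma Hker_meas {x : ℝ → ℝ} (hx : Continuous x) (L a θ : ℝ) :
    Measurable (fun q : (ℝ × ℝ) × ℝ => Hker x L a θ q.1.1 q.1.2 q.2) := by
  have heq : (fun q : (ℝ × ℝ) × ℝ => Hker x L a θ q.1.1 q.1.2 q.2)
      = Set.indicator {q : (ℝ × ℝ) × ℝ |
            x q.1.1 < q.2 ∧ q.2 ≤ x q.1.1 + L * |q.1.1 - q.1.2| ^ a}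
          (fun q => ENNReal.ofReal (|q.1.1 - q.1.2| ^ (-(1 + θ)))) := by
    ext q
    simp [Hker, Set.indicator, Set.mem_Ioc]
  rw [heq]
  have hx1 : Measurable fun q : (ℝ × ℝ) × ℝ => x q.1.1 :=
    hx.measurable.comp (measurable_fst.fst)
  have hda : Measurable fun q : (ℝ × ℝ) × ℝ => |q.1.1 - q.1.2| ^ a := by fun_prop
  refine Measurable.indicator (by fun_prop) ?_
  exact (measurableSet_lt hx1 measurable_snd).inter
    (measurableSet_le measurable_snd (hx1.add (hda.const_mul L)))

lemma tail_lintegral {θ : ℝ} (hθ : 0 < θ) {r : ℝ} (hr : 0 < r) (t : ℝ) :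
    ∫⁻ s in {s : ℝ | r ≤ |t - s|}, ENNReal.ofReal (|t - s| ^ (-(1 + θ))) ≤
      ENNReal.ofReal (2 / θ * r ^ (-θ)) := by
  have hf : Measurable fun s : ℝ => ENNReal.ofReal (|t - s| ^ (-(1 + θ))) := by fun_prop
  have hset : {s : ℝ | r ≤ |t - s|} = Iic (t - r) ∪ Ici (t + r) := by
    ext s
    simp only [mem_setOf_eq, le_abs, mem_union, mem_Iic, mem_Ici]
    constructor <;> rintro (h | h)
    · left; linarith
    · right; linarith
    · left; linarith
    · right; linarith
  have key : ∫⁻ u in Ici r, ENNReal.ofReal (|u| ^ (-(1 + θ))) = ENNReal.ofReal (r ^ (-θ) / θ) := by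
    have h1 : ∫⁻ u in Ici r, ENNReal.ofReal (|u| ^ (-(1 + θ)))
        = ∫⁻ u in Ioi r, ENNReal.ofReal (u ^ (-(1 + θ))) := by
      rw [← MeasureTheory.Measure.restrict_congr_set Ioi_ae_eq_Ici]
      refine setLIntegral_congr_fun measurableSet_Ioi (fun u hu => ?_)
      rw [abs_of_pos (hr.trans hu)]
    rw [h1, ← MeasureTheory.ofReal_integral_eq_lintegral_ofReal
        (integrableOn_Ioi_rpow_of_lt (by linarith) hr)
        (Filter.eventually_of_mem (ae_restrict_mem measurableSet_Ioi)
          (fun u hu => Real.rpow_nonneg (hr.trans hu).le _))]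
    rw [integral_Ioi_rpow_of_lt (by linarith) hr]
    congr 1
    rw [show -(1 + θ) + 1 = -θ by ring, neg_div_neg_eq]
  have hpiece2 : ∫⁻ s in Ici (t + r), ENNReal.ofReal (|t - s| ^ (-(1 + θ)))
      = ENNReal.ofReal (r ^ (-θ) / θ) := by
    rw [← key]
    have hpre : (· + t) ⁻¹' Ici (t + r) = Ici r := by
      ext u; simp only [mem_preimage, mem_Ici]; constructor <;> intro h <;> linarith
    have := (measurePreserving_add_right (volume : Measure ℝ) t).setLIntegral_comp_preimage
      (measurableSet_Ici (a := t + r)) hf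
    rw [hpre] at this
    rw [← this]
    refine setLIntegral_congr_fun measurableSet_Ici (fun u _ => ?_)
    rw [show t - (u + t) = -u by ring, abs_neg]
  have hpiece1 : ∫⁻ s in Iic (t - r), ENNReal.ofReal (|t - s| ^ (-(1 + θ)))
      = ENNReal.ofReal (r ^ (-θ) / θ) := by
    rw [← key]
    have hpre : (fun u => t - u) ⁻¹' Iic (t - r) = Ici r := by
      ext u; simp only [mem_preimage, mem_Iic, mem_Ici]; constructor <;> intro h <;> linarith
    have := (Measure.measurePreserving_sub_left (volume : Measure ℝ) t).setLIntegral_comp_preimage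
      (measurableSet_Iic (a := t - r)) hf
    rw [hpre] at this
    rw [← this]
    refine setLIntegral_congr_fun measurableSet_Ici (fun u _ => ?_)
    rw [show t - (t - u) = u by ring]
  calc ∫⁻ s in {s : ℝ | r ≤ |t - s|}, ENNReal.ofReal (|t - s| ^ (-(1 + θ)))
      = ∫⁻ s in Iic (t - r) ∪ Ici (t + r), ENNReal.ofReal (|t - s| ^ (-(1 + θ))) := by rw [hset]
    _ ≤ _ + _ := lintegral_union_le _ _ _
    _ = ENNReal.ofReal (r ^ (-θ) / θ) + ENNReal.ofReal (r ^ (-θ) / θ) := by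
        rw [hpiece1, hpiece2]
    _ ≤ ENNReal.ofReal (2 / θ * r ^ (-θ)) := by
        rw [← ENNReal.ofReal_add (by positivity) (by positivity)]
        apply ENNReal.ofReal_le_ofReal
        rw [← add_div]
        ring_nf
        exact le_refl _

lemma stepB {T α θ L : ℝ} (hα : α ∈ Set.Ioc (0:ℝ) 1) (hθ : θ ∈ Set.Ioo (0:ℝ) 1) (hL : 0 < L)
    (x : ℝ → ℝ) (t y : ℝ) :
    ∫⁻ s in Ioo 0 T, Hker x L α θ t s y ≤
      ENNReal.ofReal (2 * θ⁻¹ * L ^ (θ / α)) * ENNReal.ofReal (|x t - y| ^ (-(θ / α))) := by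
  obtain ⟨hα0, _⟩ := hα
  obtain ⟨hθ0, _⟩ := hθ
  by_cases hxy : x t < y
  swap
  · have hz : ∀ s, Hker x L α θ t s y = 0 := fun s =>
      Set.indicator_of_notMem (fun h => hxy h.1) _
    simp only [hz, lintegral_zero]
    exact bot_le
  · set d := y - x t with hd
    have hd0 : 0 < d := sub_pos.2 hxy
    set r := (d / L) ^ α⁻¹ with hrdef
    have hr : 0 < r := Real.rpow_pos_of_pos (div_pos hd0 hL) _
    have hptw : ∀ s, Hker x L α θ t s y ≤
        Set.indicator {s : ℝ | r ≤ |t - s|}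
          (fun s => ENNReal.ofReal (|t - s| ^ (-(1 + θ)))) s := by
      intro s
      by_cases hmem : y ∈ Set.Ioc (x t) (x t + L * |t - s| ^ α)
      · have h2 : d / L ≤ |t - s| ^ α := by
          rw [div_le_iff₀ hL]
          have := hmem.2
          rw [mul_comm]
          linarith
        have h3 : r ≤ |t - s| := by
          calc r ≤ (|t - s| ^ α) ^ α⁻¹ :=
                Real.rpow_le_rpow (div_nonneg hd0.le hL.le) h2 (inv_nonneg.2 hα0.le)
            _ = |t - s| := by
                rw [← Real.rpow_mul (abs_nonneg _), mul_inv_cancel₀ hα0.ne', Real.rpow_one]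
        rw [Hker, Set.indicator_of_mem hmem, Set.indicator_of_mem (show s ∈ {s : ℝ | r ≤ |t - s|} from h3)]
      · rw [Hker, Set.indicator_of_notMem hmem]
        exact bot_le
    have hmeasset : MeasurableSet {s : ℝ | r ≤ |t - s|} :=
      measurableSet_le measurable_const (by fun_prop)
    calc ∫⁻ s in Ioo 0 T, Hker x L α θ t s y
        ≤ ∫⁻ s in Ioo 0 T, Set.indicator {s : ℝ | r ≤ |t - s|}
            (fun s => ENNReal.ofReal (|t - s| ^ (-(1 + θ)))) s := lintegral_mono hptw
      _ ≤ ∫⁻ s, Set.indicator {s : ℝ | r ≤ |t - s|}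
            (fun s => ENNReal.ofReal (|t - s| ^ (-(1 + θ)))) s := setLIntegral_le_lintegral _ _
      _ = ∫⁻ s in {s : ℝ | r ≤ |t - s|}, ENNReal.ofReal (|t - s| ^ (-(1 + θ))) :=
            lintegral_indicator hmeasset _
      _ ≤ ENNReal.ofReal (2 / θ * r ^ (-θ)) := tail_lintegral hθ0 hr t
      _ = ENNReal.ofReal (2 * θ⁻¹ * L ^ (θ / α)) * ENNReal.ofReal (|x t - y| ^ (-(θ / α))) := by
          have habs : |x t - y| = d := by rw [abs_sub_comm]; exact abs_of_pos hd0
          rw [habs, ← ENNReal.ofReal_mul (by positivity)]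
          congr 1
          have hrθ : r ^ (-θ) = d ^ (-(θ / α)) * L ^ (θ / α) := by
            rw [hrdef, ← Real.rpow_mul (div_nonneg hd0.le hL.le),
              show α⁻¹ * -θ = -(θ / α) by rw [div_eq_mul_inv]; ring,
              Real.div_rpow hd0.le hL.le, Real.rpow_neg hL.le,
              div_inv_eq_mul]
          rw [hrθ]
          ring

lemma stepA {T α θ L : ℝ} (hT : 0 < T)
    {f : ℝ → ℝ} {μf : Measure ℝ} [IsFiniteMeasure μf]
    (hfvar : ∀ a b : ℝ, a ≤ b → |f b - f a| ≤ (μf (Set.Ioc a b)).toReal)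
    {x : ℝ → ℝ} (hx : Continuous x)
    (hHolder : ∀ s t : ℝ, s ∈ Icc 0 T → t ∈ Icc 0 T → |x t - x s| ≤ L * |t - s| ^ α)
    {s t : ℝ} (hs : s ∈ Ioo 0 T) (ht : t ∈ Ioo 0 T) :
    ENNReal.ofReal (|f (x t) - f (x s)| / |t - s| ^ (1 + θ)) ≤
      ∫⁻ y in closure (x '' Icc 0 T), (Hker x L α θ t s y + Hker x L α θ s t y) ∂μf := by
  rcases eq_or_ne t s with rfl | hts
  · simp
  · have hu : (0:ℝ) < |t - s| := abs_pos.2 (sub_ne_zero.2 hts)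
    set K := closure (x '' Icc 0 T) with hK
    set u := |t - s| with hu_def
    set A := Set.Ioc (min (x s) (x t)) (max (x s) (x t)) with hA
    set A₁ := Set.Ioc (x t) (x t + L * u ^ α) with hA1
    set A₂ := Set.Ioc (x s) (x s + L * u ^ α) with hA2
    set c₀ := ENNReal.ofReal (u ^ (-(1 + θ))) with hc₀
    have hsIcc : s ∈ Icc 0 T := ⟨hs.1.le, hs.2.le⟩
    have htIcc : t ∈ Icc 0 T := ⟨ht.1.le, ht.2.le⟩
    have hH1 : |x t - x s| ≤ L * u ^ α := by
      rw [hu_def]; exact hHolder s t hsIcc htIcc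
    have hH2 : |x s - x t| ≤ L * u ^ α := by
      rw [hu_def, abs_sub_comm t s]; exact hHolder t s htIcc hsIcc
    have hcases : ∀ y ∈ A, (x s < y ∧ y ≤ x t) ∨ (x t < y ∧ y ≤ x s) := by
      intro y hy
      obtain ⟨hy1, hy2⟩ := hy
      rcases le_total (x s) (x t) with h | h
      · exact Or.inl ⟨lt_of_le_of_lt (le_inf le_rfl h) hy1,
          le_trans hy2 (sup_le h le_rfl)⟩
      · exact Or.inr ⟨lt_of_le_of_lt (le_inf h le_rfl) hy1,
          le_trans hy2 (sup_le le_rfl h)⟩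
    -- A ⊆ A₁ ∪ A₂
    have hsub : A ⊆ A₁ ∪ A₂ := by
      intro y hy
      rcases hcases y hy with hc | hc
      · exact Or.inr ⟨hc.1, by linarith [le_abs_self (x t - x s), hH1, hc.2]⟩
      · exact Or.inl ⟨hc.1, by linarith [le_abs_self (x s - x t), hH2, hc.2]⟩
    -- A ⊆ K
    have hsubK : A ⊆ K := by
      intro y hy
      have h1 : y ∈ uIcc (x s) (x t) := by
        rw [Set.mem_uIcc]
        rcases hcases y hy with hc | hc
        · exact Or.inl ⟨hc.1.le, hc.2⟩
        · exact Or.inr ⟨hc.1.le, hc.2⟩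
      have h2 : y ∈ x '' uIcc s t := intermediate_value_uIcc hx.continuousOn h1
      have h3 : uIcc s t ⊆ Icc 0 T := by
        rw [← Set.uIcc_of_le hT.le]
        exact Set.uIcc_subset_uIcc (by rw [Set.uIcc_of_le hT.le]; exact hsIcc)
          (by rw [Set.uIcc_of_le hT.le]; exact htIcc)
      exact subset_closure (Set.image_mono h3 h2)
    -- bound on |Δf|
    have hΔf : ENNReal.ofReal (|f (x t) - f (x s)|) ≤ μf A := by
      rcases le_total (x s) (x t) with h | h
      · exact le_trans (ENNReal.ofReal_le_ofReal (hfvar _ _ h))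
          (le_trans ENNReal.ofReal_toReal_le
            (measure_mono (Set.Ioc_subset_Ioc inf_le_left le_sup_right)))
      · have h' := hfvar (x t) (x s) h
        rw [abs_sub_comm] at h'
        exact le_trans (ENNReal.ofReal_le_ofReal h')
          (le_trans ENNReal.ofReal_toReal_le
            (measure_mono (Set.Ioc_subset_Ioc inf_le_right le_sup_left)))
    -- LHS rewriting
    have hlhs : ENNReal.ofReal (|f (x t) - f (x s)| / |t - s| ^ (1 + θ))
        = ENNReal.ofReal (|f (x t) - f (x s)|) * c₀ := by
      rw [hc₀, hu_def, Real.rpow_neg (abs_nonneg _), div_eq_mul_inv,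
        ENNReal.ofReal_mul (abs_nonneg _)]
    -- RHS computation
    have h1 : (fun y => Hker x L α θ t s y) = Set.indicator A₁ (fun _ => c₀) := by
      funext y; rw [Hker]
    have h2 : (fun y => Hker x L α θ s t y) = Set.indicator A₂ (fun _ => c₀) := by
      funext y; rw [Hker, hA2, hc₀, hu_def, abs_sub_comm s t]
    have hrhs : ∫⁻ y in K, (Hker x L α θ t s y + Hker x L α θ s t y) ∂μf
        = c₀ * μf (A₁ ∩ K) + c₀ * μf (A₂ ∩ K) := by
      have e1 : ∫⁻ y in K, Set.indicator A₁ (fun _ => c₀) y ∂μf = c₀ * μf (A₁ ∩ K) := by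
        rw [lintegral_indicator measurableSet_Ioc, setLIntegral_const,
          Measure.restrict_apply measurableSet_Ioc]
      have e2 : ∫⁻ y in K, Set.indicator A₂ (fun _ => c₀) y ∂μf = c₀ * μf (A₂ ∩ K) := by
        rw [lintegral_indicator measurableSet_Ioc, setLIntegral_const,
          Measure.restrict_apply measurableSet_Ioc]
      calc ∫⁻ y in K, (Hker x L α θ t s y + Hker x L α θ s t y) ∂μf
          = ∫⁻ y in K, (Set.indicator A₁ (fun _ => c₀) y + Set.indicator A₂ (fun _ => c₀) y) ∂μf := by
            rw [← h1, ← h2]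
        _ = (∫⁻ y in K, Set.indicator A₁ (fun _ => c₀) y ∂μf)
            + ∫⁻ y in K, Set.indicator A₂ (fun _ => c₀) y ∂μf :=
            lintegral_add_left (measurable_const.indicator measurableSet_Ioc) _
        _ = c₀ * μf (A₁ ∩ K) + c₀ * μf (A₂ ∩ K) := by rw [e1, e2]
    rw [hlhs, hrhs]
    have hmono : μf A ≤ μf (A₁ ∩ K) + μf (A₂ ∩ K) := by
      refine le_trans (measure_mono (show A ⊆ (A₁ ∩ K) ∪ (A₂ ∩ K) from fun y hy =>
        (hsub hy).imp (fun h => ⟨h, hsubK hy⟩) (fun h => ⟨h, hsubK hy⟩))) ?_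
      exact measure_union_le _ _
    calc ENNReal.ofReal (|f (x t) - f (x s)|) * c₀ ≤ μf A * c₀ :=
          mul_le_mul_left hΔf _
      _ ≤ (μf (A₁ ∩ K) + μf (A₂ ∩ K)) * c₀ := mul_le_mul_left hmono _
      _ = c₀ * μf (A₁ ∩ K) + c₀ * μf (A₂ ∩ K) := by ring

/-- Gagliardo seminorm bound (p = 1) for a composition `f ∘ x`, where `f` is
right-continuous of finite variation with variation measure `μ_f` and `x` is
`α`-Hölder with constant `L`:
`[f ∘ x]_{θ,1} ≤ 4 θ⁻¹ L^{θ/α} ∫₀ᵀ ∫_{K_x} |x_t - y|^{-θ/α} μ_f(dy) dt`. -/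
theorem stmt15 (T α θ L : ℝ) (hT : 0 < T) (hα : α ∈ Set.Ioc (0:ℝ) 1)
    (hθ : θ ∈ Set.Ioo (0:ℝ) 1) (hL : 0 < L)
    (f : ℝ → ℝ) (μf : Measure ℝ) [IsFiniteMeasure μf]
    (hfrc : ∀ a : ℝ, ContinuousWithinAt f (Set.Ici a) a)
    (hfvar : ∀ a b : ℝ, a ≤ b → |f b - f a| ≤ (μf (Set.Ioc a b)).toReal)
    (x : ℝ → ℝ) (hx : Continuous x)
    (hHolder : ∀ s t : ℝ, s ∈ Icc 0 T → t ∈ Icc 0 T → |x t - x s| ≤ L * |t - s| ^ α) :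
    ∫⁻ t in Ioo 0 T, ∫⁻ s in Ioo 0 T,
        ENNReal.ofReal (|f (x t) - f (x s)| / |t - s| ^ (1 + θ)) ≤
      ENNReal.ofReal (4 * θ⁻¹ * L ^ (θ / α)) *
        ∫⁻ t in Ioo 0 T, ∫⁻ y in closure (x '' Icc 0 T),
          ENNReal.ofReal (|x t - y| ^ (-(θ / α))) ∂μf := by
  set I := Ioo (0:ℝ) T with hI
  set K := closure (x '' Icc 0 T) with hK
  set c₂ := ENNReal.ofReal (2 * θ⁻¹ * L ^ (θ / α)) with hc2
  set R := ∫⁻ t in I, ∫⁻ y in K, ENNReal.ofReal (|x t - y| ^ (-(θ / α))) ∂μf with hR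
  have hHm : Measurable (fun q : (ℝ × ℝ) × ℝ => Hker x L α θ q.1.1 q.1.2 q.2) :=
    Hker_meas hx L α θ
  have hΦm : Measurable (fun p : ℝ × ℝ => ∫⁻ y in K, Hker x L α θ p.1 p.2 y ∂μf) :=
    Measurable.lintegral_prod_right' hHm
  -- key per-t bound
  have key : ∀ t : ℝ, ∫⁻ s in I, ∫⁻ y in K, Hker x L α θ t s y ∂μf ≤
      c₂ * ∫⁻ y in K, ENNReal.ofReal (|x t - y| ^ (-(θ / α))) ∂μf := by
    intro t
    have hmeas : AEMeasurable (Function.uncurry fun s y => Hker x L α θ t s y)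
        ((volume.restrict I).prod (μf.restrict K)) := by
      have : (Function.uncurry fun s y => Hker x L α θ t s y)
          = (fun q : (ℝ × ℝ) × ℝ => Hker x L α θ q.1.1 q.1.2 q.2) ∘
            (fun p : ℝ × ℝ => ((t, p.1), p.2)) := rfl
      rw [this]
      exact (hHm.comp ((measurable_const.prodMk measurable_fst).prodMk
        measurable_snd)).aemeasurable
    rw [lintegral_lintegral_swap hmeas]
    calc ∫⁻ y in K, ∫⁻ s in I, Hker x L α θ t s y ∂volume ∂μf
        ≤ ∫⁻ y in K, c₂ * ENNReal.ofReal (|x t - y| ^ (-(θ / α))) ∂μf :=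
          lintegral_mono fun y => stepB hα hθ hL x t y
      _ = c₂ * ∫⁻ y in K, ENNReal.ofReal (|x t - y| ^ (-(θ / α))) ∂μf :=
          lintegral_const_mul' _ _ ENNReal.ofReal_ne_top
  have hmeas2 : AEMeasurable
      (Function.uncurry fun t s => ∫⁻ y in K, Hker x L α θ s t y ∂μf)
      ((volume.restrict I).prod (volume.restrict I)) := by
    have : (Function.uncurry fun t s => ∫⁻ y in K, Hker x L α θ s t y ∂μf)
        = (fun p : ℝ × ℝ => ∫⁻ y in K, Hker x L α θ p.1 p.2 y ∂μf) ∘ Prod.swap := rfl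
    rw [this]
    exact (hΦm.comp measurable_swap).aemeasurable
  calc ∫⁻ t in I, ∫⁻ s in I, ENNReal.ofReal (|f (x t) - f (x s)| / |t - s| ^ (1 + θ))
      ≤ ∫⁻ t in I, ∫⁻ s in I, ∫⁻ y in K,
          (Hker x L α θ t s y + Hker x L α θ s t y) ∂μf := by
        refine setLIntegral_mono' measurableSet_Ioo fun t ht => ?_
        refine setLIntegral_mono' measurableSet_Ioo fun s hs => ?_
        exact stepA hT hfvar hx hHolder hs ht
    _ = ∫⁻ t in I, ∫⁻ s in I,
          ((∫⁻ y in K, Hker x L α θ t s y ∂μf) + ∫⁻ y in K, Hker x L α θ s t y ∂μf) := by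
        refine lintegral_congr fun t => lintegral_congr fun s => ?_
        exact lintegral_add_left
          (hHm.comp ((measurable_const.prodMk measurable_const).prodMk measurable_id)) _
    _ = (∫⁻ t in I, ∫⁻ s in I, ∫⁻ y in K, Hker x L α θ t s y ∂μf)
        + ∫⁻ t in I, ∫⁻ s in I, ∫⁻ y in K, Hker x L α θ s t y ∂μf := by
        have h1 : ∀ t : ℝ, ∫⁻ s in I,
            ((∫⁻ y in K, Hker x L α θ t s y ∂μf) + ∫⁻ y in K, Hker x L α θ s t y ∂μf)
            = (∫⁻ s in I, ∫⁻ y in K, Hker x L α θ t s y ∂μf)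
              + ∫⁻ s in I, ∫⁻ y in K, Hker x L α θ s t y ∂μf := fun t =>
          lintegral_add_left (hΦm.comp (measurable_const.prodMk measurable_id)) _
        simp_rw [h1]
        exact lintegral_add_left (Measurable.lintegral_prod_right' hΦm) _
    _ = (∫⁻ t in I, ∫⁻ s in I, ∫⁻ y in K, Hker x L α θ t s y ∂μf)
        + ∫⁻ t in I, ∫⁻ s in I, ∫⁻ y in K, Hker x L α θ t s y ∂μf := by
        rw [lintegral_lintegral_swap hmeas2]
    _ ≤ c₂ * R + c₂ * R := by
        have hX : ∫⁻ t in I, ∫⁻ s in I, ∫⁻ y in K, Hker x L α θ t s y ∂μf ≤ c₂ * R := by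
          calc ∫⁻ t in I, ∫⁻ s in I, ∫⁻ y in K, Hker x L α θ t s y ∂μf
              ≤ ∫⁻ t in I, c₂ * ∫⁻ y in K, ENNReal.ofReal (|x t - y| ^ (-(θ / α))) ∂μf :=
                lintegral_mono fun t => key t
            _ = c₂ * R := lintegral_const_mul' _ _ ENNReal.ofReal_ne_top
        exact add_le_add hX hX
    _ = ENNReal.ofReal (4 * θ⁻¹ * L ^ (θ / α)) * R := by
        rw [← two_mul, ← mul_assoc]
        congr 1
        rw [hc2, show (4:ℝ) * θ⁻¹ * L ^ (θ / α) = 2 * (2 * θ⁻¹ * L ^ (θ / α)) by ring,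
          ENNReal.ofReal_mul (by norm_num : (0:ℝ) ≤ 2), ENNReal.ofReal_ofNat]
end

section
/- Let x : [0,T] → ℝ satisfy |x_t - x_s| ≤ L(t-s)^α for s ≤ t (L > 0, α ∈ (0,1]), and fix y ∈ ℝ and θ ∈ (0,1). Then ∫₀ᵀ∫₀ᵗ 1_{(x_s ∧ x_t) < y < (x_s ∨ x_t)} / (t-s)^{1+θ} ds dt ≤ 2 θ^{-1} L^{θ/α} ∫₀ᵀ |x_t - y|^{-θ/α} dt. -/
open MeasureTheory Set

lemma inner_bound (α θ L y : ℝ) (hα : α ∈ Set.Ioc (0:ℝ) 1)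
    (hθ : θ ∈ Set.Ioo (0:ℝ) 1) (hL : 0 < L) (x : ℝ → ℝ)
    (hHolder : ∀ s t : ℝ, s ≤ t → |x t - x s| ≤ L * (t - s) ^ α) (t : ℝ) :
    ∫⁻ s in Ioo 0 t,
        ENNReal.ofReal ((if min (x s) (x t) < y ∧ y < max (x s) (x t) then (1:ℝ) else 0) /
          (t - s) ^ (1 + θ)) ≤
      ENNReal.ofReal (θ⁻¹ * L ^ (θ / α) * |x t - y| ^ (-(θ / α))) := by
  obtain ⟨hα0, hα1⟩ := hα
  obtain ⟨hθ0, hθ1⟩ := hθ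
  set c := |x t - y| with hc
  by_cases hc0 : c = 0
  · -- x t = y, so the indicator is always 0
    have hxt : x t = y := by
      have := abs_eq_zero.mp hc0
      linarith [sub_eq_zero.mp this]
    have hzero : ∀ s : ℝ,
        ENNReal.ofReal ((if min (x s) (x t) < y ∧ y < max (x s) (x t) then (1:ℝ) else 0) /
          (t - s) ^ (1 + θ)) = 0 := by
      intro s
      have hcond : ¬ (min (x s) (x t) < y ∧ y < max (x s) (x t)) := by
        rintro ⟨h1, h2⟩
        rw [min_lt_iff] at h1
        rw [lt_max_iff] at h2
        rcases h1 with h1 | h1 <;> rcases h2 with h2 | h2 <;> linarith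
      rw [if_neg hcond]
      simp
    calc ∫⁻ s in Ioo 0 t,
        ENNReal.ofReal ((if min (x s) (x t) < y ∧ y < max (x s) (x t) then (1:ℝ) else 0) /
          (t - s) ^ (1 + θ))
        = ∫⁻ _s in Ioo 0 t, 0 := by
          apply lintegral_congr
          intro s; exact hzero s
      _ = 0 := lintegral_zero
      _ ≤ _ := zero_le
  · have hcpos : 0 < c := lt_of_le_of_ne (abs_nonneg _) (Ne.symm hc0)
    set δ : ℝ := (c / L) ^ (α⁻¹) with hδdef
    have hδpos : 0 < δ := Real.rpow_pos_of_pos (div_pos hcpos hL) _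
    -- key: if the indicator holds at s ∈ Ioo 0 t then δ ≤ t - s
    have hkey : ∀ s ∈ Ioo (0:ℝ) t,
        (min (x s) (x t) < y ∧ y < max (x s) (x t)) → δ ≤ t - s := by
      rintro s ⟨_, hst⟩ ⟨h1, h2⟩
      have hcle : c ≤ |x t - x s| := by
        rcases le_total (x s) (x t) with h | h
        · rw [min_eq_left h] at h1
          rw [max_eq_right h] at h2
          have e1 : |x t - y| = x t - y := abs_of_pos (by linarith)
          have e2 : |x t - x s| = x t - x s := abs_of_pos (by linarith)
          rw [hc, e1, e2]; linarith
        · rw [min_eq_right h] at h1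
          rw [max_eq_left h] at h2
          have e1 : |x t - y| = -(x t - y) := abs_of_neg (by linarith)
          have e2 : |x t - x s| = -(x t - x s) := abs_of_neg (by linarith)
          rw [hc, e1, e2]; linarith
      have hH : c ≤ L * (t - s) ^ α := hcle.trans (hHolder s t hst.le)
      have hdiv : c / L ≤ (t - s) ^ α := (div_le_iff₀' hL).mpr hH
      have hts : (0:ℝ) ≤ t - s := by linarith
      calc δ = (c / L) ^ (α⁻¹) := rfl
        _ ≤ ((t - s) ^ α) ^ (α⁻¹) :=
            Real.rpow_le_rpow (div_nonneg hcpos.le hL.le) hdiv (by positivity)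
        _ = (t - s) ^ (α * α⁻¹) := (Real.rpow_mul hts _ _).symm
        _ = t - s := by rw [mul_inv_cancel₀ hα0.ne', Real.rpow_one]
    -- pointwise bound by an indicator function
    have hbound : ∀ s ∈ Ioo (0:ℝ) t,
        ENNReal.ofReal ((if min (x s) (x t) < y ∧ y < max (x s) (x t) then (1:ℝ) else 0) /
          (t - s) ^ (1 + θ)) ≤
        (Iic (t - δ)).indicator (fun s => ENNReal.ofReal ((t - s) ^ (-(1 + θ)))) s := by
      intro s hs
      by_cases hcond : min (x s) (x t) < y ∧ y < max (x s) (x t)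
      · have hsle : s ≤ t - δ := by
          have := hkey s hs hcond
          linarith
        have hts : (0:ℝ) ≤ t - s := by linarith [hs.2]
        rw [indicator_of_mem (mem_Iic.mpr hsle)]
        rw [if_pos hcond, Real.rpow_neg hts, one_div]
      · rw [if_neg hcond]
        simp
    calc ∫⁻ s in Ioo 0 t,
        ENNReal.ofReal ((if min (x s) (x t) < y ∧ y < max (x s) (x t) then (1:ℝ) else 0) /
          (t - s) ^ (1 + θ))
        ≤ ∫⁻ s in Ioo 0 t,
            (Iic (t - δ)).indicator (fun s => ENNReal.ofReal ((t - s) ^ (-(1 + θ)))) s :=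
          setLIntegral_mono' measurableSet_Ioo hbound
      _ ≤ ∫⁻ s, (Iic (t - δ)).indicator (fun s => ENNReal.ofReal ((t - s) ^ (-(1 + θ)))) s :=
          setLIntegral_le_lintegral _ _
      _ = ∫⁻ s in Iic (t - δ), ENNReal.ofReal ((t - s) ^ (-(1 + θ))) :=
          lintegral_indicator measurableSet_Iic _
      _ = ∫⁻ u in Ici δ, ENNReal.ofReal (u ^ (-(1 + θ))) := by
          have hpres : MeasurePreserving (fun s : ℝ => t - s) volume volume :=
            Measure.measurePreserving_sub_left volume t
          have hemb : MeasurableEmbedding (fun s : ℝ => t - s) :=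
            (Homeomorph.subLeft t).measurableEmbedding
          have hpre : (fun s : ℝ => t - s) ⁻¹' (Ici δ) = Iic (t - δ) := by
            ext s
            simp only [mem_preimage, mem_Ici, mem_Iic]
            constructor <;> intro h <;> linarith
          rw [← hpre]
          exact hpres.setLIntegral_comp_preimage_emb hemb
            (fun u => ENNReal.ofReal (u ^ (-(1 + θ)))) (Ici δ)
      _ = ∫⁻ u in Ioi δ, ENNReal.ofReal (u ^ (-(1 + θ))) := by
          rw [Measure.restrict_congr_set Ioi_ae_eq_Ici]
      _ = ENNReal.ofReal (∫ u in Ioi δ, u ^ (-(1 + θ))) := by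
          rw [← ofReal_integral_eq_lintegral_ofReal]
          · exact integrableOn_Ioi_rpow_of_lt (by linarith) hδpos
          · filter_upwards [ae_restrict_mem measurableSet_Ioi] with u hu
            exact Real.rpow_nonneg (le_of_lt (hδpos.trans hu)) _
      _ = ENNReal.ofReal (θ⁻¹ * L ^ (θ / α) * c ^ (-(θ / α))) := by
          rw [integral_Ioi_rpow_of_lt (by linarith) hδpos]
          congr 1
          have h1 : -(1 + θ) + 1 = -θ := by ring
          rw [h1]
          have hδpow : δ ^ (-θ) = L ^ (θ / α) * c ^ (-(θ / α)) := by
            rw [hδdef, ← Real.rpow_mul (div_nonneg hcpos.le hL.le)]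
            have h2 : α⁻¹ * (-θ) = -(θ / α) := by
              field_simp
            rw [h2, Real.div_rpow hcpos.le hL.le, Real.rpow_neg hL.le (θ / α)]
            rw [div_eq_mul_inv, inv_inv, mul_comm]
          rw [hδpow]
          field_simp
  
/-- Level-crossing estimate over the square: for an `α`-Hölder path `x` with constant `L`,
`∫₀ᵀ∫₀ᵗ 1_{x_s ∧ x_t < y < x_s ∨ x_t}/(t-s)^{1+θ} ds dt ≤ 2θ⁻¹ L^{θ/α} ∫₀ᵀ |x_t - y|^{-θ/α} dt`. -/
theorem stmt16 (T α θ L y : ℝ) (hT : 0 < T) (hα : α ∈ Set.Ioc (0:ℝ) 1)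
    (hθ : θ ∈ Set.Ioo (0:ℝ) 1) (hL : 0 < L) (x : ℝ → ℝ)
    (hHolder : ∀ s t : ℝ, s ≤ t → |x t - x s| ≤ L * (t - s) ^ α) :
    ∫⁻ t in Ioo 0 T, ∫⁻ s in Ioo 0 t,
        ENNReal.ofReal ((if min (x s) (x t) < y ∧ y < max (x s) (x t) then (1:ℝ) else 0) /
          (t - s) ^ (1 + θ)) ≤
      ENNReal.ofReal (2 * θ⁻¹ * L ^ (θ / α)) *
        ∫⁻ t in Ioo 0 T, ENNReal.ofReal (|x t - y| ^ (-(θ / α))) := by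
  have hθ0 := hθ.1
  have hnn : (0:ℝ) ≤ θ⁻¹ * L ^ (θ / α) := by positivity
  calc ∫⁻ t in Ioo 0 T, ∫⁻ s in Ioo 0 t,
        ENNReal.ofReal ((if min (x s) (x t) < y ∧ y < max (x s) (x t) then (1:ℝ) else 0) /
          (t - s) ^ (1 + θ))
      ≤ ∫⁻ t in Ioo 0 T, ENNReal.ofReal (θ⁻¹ * L ^ (θ / α) * |x t - y| ^ (-(θ / α))) :=
        lintegral_mono fun t => inner_bound α θ L y hα hθ hL x hHolder t
    _ = ∫⁻ t in Ioo 0 T,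
          ENNReal.ofReal (θ⁻¹ * L ^ (θ / α)) * ENNReal.ofReal (|x t - y| ^ (-(θ / α))) := by
        apply lintegral_congr
        intro t
        rw [ENNReal.ofReal_mul hnn]
    _ = ENNReal.ofReal (θ⁻¹ * L ^ (θ / α)) *
          ∫⁻ t in Ioo 0 T, ENNReal.ofReal (|x t - y| ^ (-(θ / α))) :=
        lintegral_const_mul' _ _ ENNReal.ofReal_ne_top
    _ ≤ ENNReal.ofReal (2 * θ⁻¹ * L ^ (θ / α)) *
          ∫⁻ t in Ioo 0 T, ENNReal.ofReal (|x t - y| ^ (-(θ / α))) := by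
        apply mul_le_mul_left
        apply ENNReal.ofReal_le_ofReal
        nlinarith [Real.rpow_nonneg hL.le (θ / α), inv_nonneg.mpr hθ0.le]
end
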